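/- arXiv:1006.1575 — 2 statements merged into one kernel-verified Lean document; each statement's English description precedes it below -/
import Mathlib

section
/- Let K : ℝ → ℝ be a continuous even kernel with K(0) = 1 and characteristic exponent s, meaning k_s := lim_{x→0} (1 - K(x))/|x|^s exists and is nonzero. Let C : ℝ → ℝ satisfy that g_s(t) := sup_{|u| ≥ |t|} |u|^s |C(u)| is integrable, and let β_n → 0 with β_n > 0. Then (1/(2π)) ∫_ℝ (K(β_n t) - 1) C(t) e^{-itλ} dt = -k_s (β_n)^s (1/(2π)) ∫_ℝ |t|^s C(t) e^{-itλ} dt + o((β_n)^s), uniformly in λ. -/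
open Filter MeasureTheory Real Complex

theorem stmt_11 (K : ℝ → ℝ) (hK_cont : Continuous K) (hK_even : ∀ x, K (-x) = K x)
    (hK0 : K 0 = 1) (hK_bdd : ∃ M : ℝ, ∀ x, |K x| ≤ M)
    (s ks : ℝ) (hs : 0 < s) (hks : ks ≠ 0)
    (hk : Tendsto (fun x : ℝ => (1 - K x) / |x| ^ s) (nhdsWithin 0 {0}ᶜ) (nhds ks))
    (C : ℝ → ℝ) (hC_cont : Continuous C) (hC_int : Integrable C)
    (hCs_int : Integrable (fun t : ℝ => |t| ^ s * C t))
    (hg_int : Integrable (fun t : ℝ => ⨆ u ∈ {u : ℝ | |t| ≤ |u|}, |u| ^ s * |C u|))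
    (β : ℕ → ℝ) (hβ_pos : ∀ n, 0 < β n) (hβ0 : Tendsto β atTop (nhds 0)) :
    ∀ ε > (0 : ℝ), ∀ᶠ n : ℕ in atTop, ∀ l : ℝ,
      ‖((1 / (2 * π)) * (∫ t : ℝ, ((K (β n * t) - 1 : ℝ) : ℂ) * (C t : ℂ) *
            Complex.exp (-(t * l) * Complex.I)) +
          (ks : ℂ) * (β n ^ s : ℝ) *
            ((1 / (2 * π)) * ∫ t : ℝ, ((|t| ^ s * C t : ℝ) : ℂ) *
              Complex.exp (-(t * l) * Complex.I)))‖ ≤ ε * β n ^ s := by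
  intro ε hε
  obtain ⟨M, hM⟩ := hK_bdd
  -- Step 1: a global bound on φ x := (1 - K x)/|x|^s - ks away from 0
  obtain ⟨B, hB, hφB⟩ :
      ∃ B : ℝ, 0 < B ∧ ∀ x : ℝ, x ≠ 0 → |(1 - K x) / |x| ^ s - ks| ≤ B := by
    have h0 : Tendsto (fun x : ℝ => (1 - K x) / |x| ^ s - ks) (nhdsWithin 0 {0}ᶜ) (nhds 0) := by
      simpa using hk.sub_const ks
    have h1 : ∀ᶠ x in nhdsWithin 0 {0}ᶜ, |(1 - K x) / |x| ^ s - ks| < 1 := by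
      have := Metric.tendsto_nhds.mp h0 1 one_pos
      simpa [Real.dist_eq] using this
    obtain ⟨δ, hδpos, hδ⟩ := Metric.mem_nhdsWithin_iff.mp h1
    refine ⟨max 1 ((1 + M) / δ ^ s + |ks|), lt_of_lt_of_le one_pos (le_max_left _ _), ?_⟩
    intro x hx
    rcases lt_or_ge (|x|) δ with h | h
    · refine le_trans (le_of_lt ?_) (le_max_left _ _)
      exact hδ ⟨by simpa [Metric.mem_ball, Real.dist_eq] using h, hx⟩
    · refine le_trans ?_ (le_max_right _ _)
      have hxs : (0:ℝ) < |x| ^ s := Real.rpow_pos_of_pos (abs_pos.mpr hx) s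
      have hδs : (0:ℝ) < δ ^ s := Real.rpow_pos_of_pos hδpos s
      have h2 : |1 - K x| ≤ 1 + M := by
        have := hM x
        have := abs_sub (1:ℝ) (K x)
        simp at this ⊢
        linarith
      have h3 : δ ^ s ≤ |x| ^ s := Real.rpow_le_rpow hδpos.le h hs.le
      have h4 : |(1 - K x) / |x| ^ s| ≤ (1 + M) / δ ^ s := by
        rw [abs_div, _root_.abs_of_nonneg (le_of_lt hxs)]
        have hM0 : (0:ℝ) ≤ 1 + M := by
          have := hM 0; have := abs_nonneg (K 0); linarith
        exact div_le_div₀ hM0 h2 hδs h3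
      calc |(1 - K x) / |x| ^ s - ks| ≤ |(1 - K x) / |x| ^ s| + |ks| := abs_sub _ _
      _ ≤ (1 + M) / δ ^ s + |ks| := by linarith
  -- Step 2: dominated convergence
  have hFlim : Tendsto (fun n => ∫ t : ℝ,
      |t| ^ s * |(1 - K (β n * t)) / |β n * t| ^ s - ks| * |C t|) atTop (nhds 0) := by
    set φ : ℝ → ℝ := fun x => (1 - K x) / |x| ^ s - ks with hφ_def
    have habs : Continuous fun x : ℝ => |x| ^ s :=
      continuous_abs.rpow_const (fun x => Or.inr hs.le)
    have hφm : Measurable φ :=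
      (((continuous_const.sub hK_cont).measurable).div habs.measurable).sub measurable_const
    have hφ0 : Tendsto φ (nhdsWithin 0 {0}ᶜ) (nhds 0) := by
      simpa [hφ_def] using hk.sub_const ks
    have hbound_int : Integrable (fun t : ℝ => B * (|t| ^ s * |C t|)) := by
      refine (Integrable.const_mul ?_ B)
      refine hCs_int.abs.congr (Eventually.of_forall fun t => ?_)
      show |(|t| ^ s * C t)| = |t| ^ s * |C t|
      rw [abs_mul, _root_.abs_of_nonneg (Real.rpow_nonneg (abs_nonneg t) s)]
    have h := MeasureTheory.tendsto_integral_filter_of_dominated_convergence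
      (μ := (volume : Measure ℝ)) (l := (atTop : Filter ℕ))
      (F := fun n t => |t| ^ s * |φ (β n * t)| * |C t|)
      (f := fun _ : ℝ => (0:ℝ)) (fun t => B * (|t| ^ s * |C t|))
      ?_ ?_ hbound_int ?_
    · simp only [hφ_def] at h
      simpa using h
    · refine Eventually.of_forall fun n => ?_
      refine Measurable.aestronglyMeasurable ?_
      exact ((habs.measurable.mul ((hφm.comp (measurable_const_mul (β n))).abs)).mul
        hC_cont.measurable.abs)
    · refine Eventually.of_forall fun n => Eventually.of_forall fun t => ?_
      rw [Real.norm_eq_abs, _root_.abs_of_nonneg (by positivity)]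
      rcases eq_or_ne t 0 with rfl | ht
      · simp [Real.zero_rpow hs.ne']
      · have h1 : |φ (β n * t)| ≤ B := hφB _ (mul_ne_zero (hβ_pos n).ne' ht)
        have h2 : (0:ℝ) ≤ |t| ^ s := Real.rpow_nonneg (abs_nonneg t) s
        have h3 : (0:ℝ) ≤ |C t| := abs_nonneg _
        calc |t| ^ s * |φ (β n * t)| * |C t| ≤ |t| ^ s * B * |C t| := by
              apply mul_le_mul_of_nonneg_right _ h3
              exact mul_le_mul_of_nonneg_left h1 h2
        _ = B * (|t| ^ s * |C t|) := by ring
    · have h0 : ∀ᵐ t : ℝ, t ≠ 0 := by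
        refine ae_iff.mpr ?_
        simp
      filter_upwards [h0] with t ht
      have h1 : Tendsto (fun n => β n * t) atTop (nhdsWithin 0 {0}ᶜ) := by
        rw [tendsto_nhdsWithin_iff]
        constructor
        · simpa using hβ0.mul_const t
        · exact Eventually.of_forall fun n => mul_ne_zero (hβ_pos n).ne' ht
      have h2 : Tendsto (fun n => φ (β n * t)) atTop (nhds 0) := hφ0.comp h1
      have h3 := ((h2.abs).const_mul (|t| ^ s)).mul_const (|C t|)
      simpa using h3
  -- Step 3: conclude
  filter_upwards [hFlim.eventually_lt_const hε] with n hn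
  intro l
  set b := β n with hb_def
  have hb : 0 < b := hβ_pos n
  have hbs : (0:ℝ) < b ^ s := Real.rpow_pos_of_pos hb s
  set E : ℝ → ℂ := fun t => Complex.exp (-(t * l) * Complex.I) with hE_def
  have hEabs : ∀ t : ℝ, ‖E t‖ = 1 := by
    intro t
    simp [hE_def, Complex.norm_exp]
  have hE_cont : Continuous E := by
    apply Complex.continuous_exp.comp
    fun_prop
  -- Integrability of both integrands
  have hf_int : Integrable (fun t : ℝ => ((K (b * t) - 1 : ℝ) : ℂ) * (C t : ℂ) * E t) := by
    refine Integrable.mono' (g := fun t => (M + 1) * |C t|)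
      ((hC_int.abs.const_mul (M + 1))) ?_ (Eventually.of_forall fun t => ?_)
    · exact (((Complex.continuous_ofReal.comp
        ((hK_cont.comp (continuous_const.mul continuous_id)).sub continuous_const)).mul
        (Complex.continuous_ofReal.comp hC_cont)).mul hE_cont).aestronglyMeasurable
    · rw [norm_mul, norm_mul, hEabs, mul_one,
        Complex.norm_real, Complex.norm_real, Real.norm_eq_abs, Real.norm_eq_abs]
      have h1 : |K (b * t) - 1| ≤ M + 1 := by
        have := hM (b * t)
        have := abs_sub (K (b * t)) (1:ℝ)
        simp at this
        linarith
      exact mul_le_mul_of_nonneg_right h1 (abs_nonneg _)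
  have hg_intC : Integrable (fun t : ℝ => ((|t| ^ s * C t : ℝ) : ℂ) * E t) := by
    refine Integrable.mono' (g := fun t => |(|t| ^ s * C t)|) hCs_int.abs
      ?_ (Eventually.of_forall fun t => ?_)
    · refine AEStronglyMeasurable.mul ?_ hE_cont.aestronglyMeasurable
      refine (Measurable.aestronglyMeasurable ?_)
      exact Complex.measurable_ofReal.comp
        (((_root_.continuous_abs.rpow_const fun x => Or.inr hs.le).measurable).mul
          hC_cont.measurable)
    · rw [norm_mul, hEabs, mul_one, Complex.norm_real, Real.norm_eq_abs]
  -- rewrite the expression as a single integral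
  set c : ℂ := (ks : ℂ) * ((b ^ s : ℝ) : ℂ) with hc_def
  have hstep1 :
      (1 / (2 * (π:ℂ))) * (∫ t : ℝ, ((K (b * t) - 1 : ℝ) : ℂ) * (C t : ℂ) * E t) +
        (ks : ℂ) * ((b ^ s : ℝ) : ℂ) *
          ((1 / (2 * (π:ℂ))) * ∫ t : ℝ, ((|t| ^ s * C t : ℝ) : ℂ) * E t)
      = (1 / (2 * (π:ℂ))) *
          (∫ t : ℝ, (((K (b * t) - 1 : ℝ) : ℂ) * (C t : ℂ) * E t +
            c * (((|t| ^ s * C t : ℝ) : ℂ) * E t))) := by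
    rw [integral_add hf_int (hg_intC.const_mul c), integral_const_mul]
    ring
  rw [hstep1, norm_mul]
  have hπabs : ‖1 / (2 * (π:ℂ))‖ = 1 / (2 * π) := by
    rw [norm_div, norm_one, norm_mul, Complex.norm_two, Complex.norm_real, Real.norm_eq_abs,
      _root_.abs_of_pos Real.pi_pos]
  rw [hπabs]
  -- bound the norm of the integral
  have hptwise : ∀ t : ℝ, t ≠ 0 →
      ((K (b * t) - 1 : ℝ) : ℂ) * (C t : ℂ) * E t + c * (((|t| ^ s * C t : ℝ) : ℂ) * E t)
      = ((-(b ^ s * |t| ^ s * ((1 - K (b * t)) / |b * t| ^ s - ks)) : ℝ) : ℂ) *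
          (C t : ℂ) * E t := by
    intro t ht
    have hbt : b * t ≠ 0 := mul_ne_zero hb.ne' ht
    have habs_bt : |b * t| ^ s = b ^ s * |t| ^ s := by
      rw [abs_mul, _root_.abs_of_pos hb, Real.mul_rpow hb.le (abs_nonneg t)]
    have hne : |b * t| ^ s ≠ 0 := (Real.rpow_pos_of_pos (abs_pos.mpr hbt) s).ne'
    have e1 : (1 - K (b * t)) / |b * t| ^ s * |b * t| ^ s = 1 - K (b * t) :=
      div_mul_cancel₀ _ hne
    have key : (K (b * t) - 1) + ks * (b ^ s) * (|t| ^ s)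
        = -(b ^ s * |t| ^ s * ((1 - K (b * t)) / |b * t| ^ s - ks)) := by
      linear_combination e1 - ((1 - K (b * t)) / |b * t| ^ s) * habs_bt
    rw [hc_def]
    have keyC : ((K (b * t) - 1 : ℝ) : ℂ) + (ks : ℂ) * ((b ^ s : ℝ) : ℂ) * ((|t| ^ s : ℝ) : ℂ)
        = ((-(b ^ s * |t| ^ s * ((1 - K (b * t)) / |b * t| ^ s - ks)) : ℝ) : ℂ) := by
      rw [← key]
      push_cast
      ring
    rw [Complex.ofReal_mul]
    linear_combination ((C t : ℂ) * E t) * keyC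
  have hnorm_eq : (∫ t : ℝ, ‖((K (b * t) - 1 : ℝ) : ℂ) * (C t : ℂ) * E t +
        c * (((|t| ^ s * C t : ℝ) : ℂ) * E t)‖)
      = b ^ s * ∫ t : ℝ, |t| ^ s * |(1 - K (b * t)) / |b * t| ^ s - ks| * |C t| := by
    rw [← integral_const_mul]
    refine integral_congr_ae ?_
    have h0 : ∀ᵐ t : ℝ, t ≠ 0 := by
      refine ae_iff.mpr ?_
      simp
    filter_upwards [h0] with t ht
    rw [hptwise t ht, norm_mul, norm_mul, hEabs, mul_one,
      Complex.norm_real, Complex.norm_real, Real.norm_eq_abs, Real.norm_eq_abs, abs_neg, abs_mul, abs_mul,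
      _root_.abs_of_pos hbs, _root_.abs_of_nonneg (Real.rpow_nonneg (abs_nonneg t) s)]
    ring
  have hF_nonneg : (0:ℝ) ≤ ∫ t : ℝ,
      |t| ^ s * |(1 - K (b * t)) / |b * t| ^ s - ks| * |C t| :=
    integral_nonneg fun t => by positivity
  have hbound : ‖(∫ t : ℝ, (((K (b * t) - 1 : ℝ) : ℂ) * (C t : ℂ) * E t +
        c * (((|t| ^ s * C t : ℝ) : ℂ) * E t)))‖
      ≤ b ^ s * ∫ t : ℝ, |t| ^ s * |(1 - K (b * t)) / |b * t| ^ s - ks| * |C t| := by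
    rw [← hnorm_eq]
    exact norm_integral_le_integral_norm _
  have hπ := Real.pi_gt_three
  have hFn : (∫ t : ℝ, |t| ^ s * |(1 - K (b * t)) / |b * t| ^ s - ks| * |C t|) < ε := hn
  calc (1 / (2 * π)) * ‖(∫ t : ℝ, (((K (b * t) - 1 : ℝ) : ℂ) * (C t : ℂ) * E t +
        c * (((|t| ^ s * C t : ℝ) : ℂ) * E t)))‖
      ≤ (1 / (2 * π)) * (b ^ s *
          ∫ t : ℝ, |t| ^ s * |(1 - K (b * t)) / |b * t| ^ s - ks| * |C t|) := by
        apply mul_le_mul_of_nonneg_left hbound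
        positivity
  _ ≤ ε * b ^ s := by
      have h1 : b ^ s * (∫ t : ℝ, |t| ^ s * |(1 - K (b * t)) / |b * t| ^ s - ks| * |C t|)
          ≤ b ^ s * ε := mul_le_mul_of_nonneg_left hFn.le hbs.le
      have h2 : (0:ℝ) < 2 * π := by linarith
      have h3 : 1 / (2 * π) ≤ 1 := by
        rw [div_le_one h2]; linarith
      have h4 : (0:ℝ) ≤ b ^ s *
          ∫ t : ℝ, |t| ^ s * |(1 - K (b * t)) / |b * t| ^ s - ks| * |C t| :=
        mul_nonneg hbs.le hF_nonneg
      calc (1 / (2 * π)) * (b ^ s *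
            ∫ t : ℝ, |t| ^ s * |(1 - K (b * t)) / |b * t| ^ s - ks| * |C t|)
          ≤ 1 * (b ^ s *
            ∫ t : ℝ, |t| ^ s * |(1 - K (b * t)) / |b * t| ^ s - ks| * |C t|) :=
            mul_le_mul_of_nonneg_right h3 h4
      _ = b ^ s * ∫ t : ℝ, |t| ^ s * |(1 - K (b * t)) / |b * t| ^ s - ks| * |C t| := one_mul _
      _ ≤ b ^ s * ε := h1
      _ = ε * b ^ s := mul_comm _ _
end

section
/- Let φ : ℝ → ℂ be integrable with lim_{λ→∞} |λ|^p |φ(λ)| = A for some p > 1 and A ≥ 0. Then the aliasing error satisfies ∑_{l ∈ ℤ, l ≠ 0} |φ(λ + 2π ρ_n l)| = (A/(2π)^p) (∑_{|l|>0} 1/|l|^p) ρ_n^{-p} + o(ρ_n^{-p}) as ρ_n → ∞, for each fixed λ. -/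
open Filter MeasureTheory Real

theorem stmt_12 (φ : ℝ → ℂ) (hφ_int : Integrable φ)
    (p A : ℝ) (hp : 1 < p) (hA : 0 ≤ A)
    (htail : Tendsto (fun l : ℝ => |l| ^ p * ‖φ l‖) (cocompact ℝ) (nhds A))
    (ρ : ℕ → ℝ) (hρ_pos : ∀ n, 0 < ρ n) (hρ : Tendsto ρ atTop atTop) (lam : ℝ) :
    Tendsto
      (fun n : ℕ => ρ n ^ p *
        ∑' l : ℤ, if l ≠ 0 then ‖φ (lam + 2 * π * ρ n * l)‖ else 0)
      atTop
      (nhds ((A / (2 * π) ^ p) * ∑' l : ℤ, if l ≠ 0 then 1 / |(l : ℝ)| ^ p else 0)) := by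
  have hπ : (0 : ℝ) < π := Real.pi_pos
  have hp0 : (0 : ℝ) < p := by linarith
  -- cocompact ℝ as comap of abs
  have hcoc : cocompact ℝ = Filter.comap (fun x : ℝ => |x|) atTop := by
    rw [← Metric.cobounded_eq_cocompact, ← Metric.comap_dist_right_atTop (0 : ℝ)]
    simp [Real.dist_eq]
  -- rewrite target sum
  have htsum_eq :
      (A / (2 * π) ^ p) * (∑' l : ℤ, if l ≠ 0 then 1 / |(l : ℝ)| ^ p else 0)
        = ∑' l : ℤ, (if l ≠ 0 then A / (2 * π) ^ p * (1 / |(l : ℝ)| ^ p) else 0) := by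
    rw [← tsum_mul_left]
    congr 1; funext l; split <;> simp
  rw [htsum_eq]
  have hfun : (fun n : ℕ => ρ n ^ p *
      ∑' l : ℤ, if l ≠ 0 then ‖φ (lam + 2 * π * ρ n * l)‖ else 0)
      = fun n : ℕ => ∑' l : ℤ,
        (if l ≠ 0 then ρ n ^ p * ‖φ (lam + 2 * π * ρ n * l)‖ else 0) := by
    funext n; rw [← tsum_mul_left]; congr 1; funext l; split <;> simp
  rw [hfun]
  -- quantitative tail bound
  obtain ⟨R, hR0, hRbd⟩ : ∃ R : ℝ, 0 ≤ R ∧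
      ∀ x : ℝ, R ≤ |x| → |x| ^ p * ‖φ x‖ ≤ A + 1 := by
    have h1 : ∀ᶠ x in cocompact ℝ, |x| ^ p * ‖φ x‖ ≤ A + 1 :=
      htail.eventually_le_const (by linarith)
    rw [hcoc, Filter.eventually_comap] at h1
    obtain ⟨R, hR⟩ := h1.exists_forall_of_atTop
    exact ⟨max R 0, le_max_right _ _, fun x hx =>
      hR |x| (le_trans (le_max_left _ _) hx) x rfl⟩
  -- dominated convergence
  apply tendsto_tsum_of_dominated_convergence
    (bound := fun l : ℤ => (A + 1) / π ^ p * |(l : ℝ)| ^ (-p))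
  · exact (Real.summable_abs_int_rpow hp).mul_left _
  · -- pointwise limits
    intro l
    by_cases hl : l = 0
    · simp [hl]
    · simp only [hl, if_neg, ne_eq, not_false_iff, if_true]
      have hl1 : (1 : ℝ) ≤ |(l : ℝ)| := by
        rw [← Int.cast_abs]; exact_mod_cast Int.one_le_abs (by simpa using hl)
      have hl0 : (0 : ℝ) < |(l : ℝ)| := lt_of_lt_of_le one_pos hl1
      set x : ℕ → ℝ := fun n => lam + 2 * π * ρ n * l with hx
      -- |x n| → ∞
      have habs : Tendsto (fun n => |x n|) atTop atTop := by
        have hbase : Tendsto (fun n => 2 * π * ρ n + -|lam|) atTop atTop :=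
          tendsto_atTop_add_const_right _ _ (hρ.const_mul_atTop (by linarith : (0:ℝ) < 2 * π))
        apply tendsto_atTop_mono' _ _ hbase
        filter_upwards with n
        have h2 : |2 * π * ρ n * l| = 2 * π * ρ n * |(l : ℝ)| := by
          rw [abs_mul]
          rw [abs_of_pos (mul_pos (by linarith : (0:ℝ) < 2 * π) (hρ_pos n))]
        calc 2 * π * ρ n + -|lam| ≤ 2 * π * ρ n * |(l : ℝ)| - |lam| := by
              have h9 := mul_le_mul_of_nonneg_left hl1
                (le_of_lt (mul_pos (by linarith : (0:ℝ) < 2 * π) (hρ_pos n)))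
              rw [mul_one] at h9
              linarith
          _ = |2 * π * ρ n * l| - |lam| := by rw [h2]
          _ ≤ |x n| := by
              have := abs_sub_abs_le_abs_sub (2 * π * ρ n * l) (-lam)
              simp only [abs_neg] at this
              calc |2 * π * ρ n * (l:ℝ)| - |lam|
                  ≤ |2 * π * ρ n * l - -lam| := this
                _ = |x n| := by rw [hx]; ring_nf
      have hcocomp : Tendsto x atTop (cocompact ℝ) := by
        rw [hcoc, tendsto_comap_iff]; exact habs
      have hfactor2 : Tendsto (fun n => |x n| ^ p * ‖φ (x n)‖) atTop (nhds A) :=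
        htail.comp hcocomp
      -- ratio ρ n / |x n| → 1 / (2π|l|)
      have hratio : Tendsto (fun n => ρ n / |x n|) atTop (nhds (1 / (2 * π * |(l : ℝ)|))) := by
        have hxr : Tendsto (fun n => x n / ρ n) atTop (nhds (2 * π * l)) := by
          have : Tendsto (fun n => lam / ρ n + 2 * π * l) atTop (nhds (0 + 2 * π * l)) :=
            (tendsto_const_nhds.div_atTop hρ).add tendsto_const_nhds
          rw [zero_add] at this
          apply this.congr
          intro n
          field_simp [(hρ_pos n).ne']
          ring
        have habsr : Tendsto (fun n => |x n / ρ n|) atTop (nhds (2 * π * |(l : ℝ)|)) := by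
          have := hxr.abs
          rwa [abs_mul, abs_of_pos (by linarith : (0:ℝ) < 2 * π)] at this
        have hne : (2 * π * |(l:ℝ)|) ≠ 0 :=
          ne_of_gt (mul_pos (by linarith : (0:ℝ) < 2 * π) hl0)
        have hinv := habsr.inv₀ hne
        rw [show (2 * π * |(l:ℝ)|)⁻¹ = 1 / (2 * π * |(l:ℝ)|) by rw [one_div]] at hinv
        apply hinv.congr
        intro n
        rw [abs_div, abs_of_pos (hρ_pos n), inv_div]
      have hpow : Tendsto (fun n => (ρ n / |x n|) ^ p) atTop
          (nhds ((1 / (2 * π * |(l : ℝ)|)) ^ p)) :=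
        hratio.rpow_const (Or.inl (by
          refine ne_of_gt (div_pos one_pos (mul_pos (by linarith : (0:ℝ) < 2 * π) hl0))))
      have hmain : Tendsto (fun n => (ρ n / |x n|) ^ p * (|x n| ^ p * ‖φ (x n)‖))
          atTop (nhds ((1 / (2 * π * |(l : ℝ)|)) ^ p * A)) := hpow.mul hfactor2
      have hlim_eq : (1 / (2 * π * |(l : ℝ)|)) ^ p * A = A / (2 * π) ^ p * (1 / |(l : ℝ)| ^ p) := by
        rw [div_rpow (by norm_num) (mul_pos (by linarith : (0:ℝ) < 2 * π) hl0).le,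
          Real.one_rpow, Real.mul_rpow (by linarith : (0:ℝ) ≤ 2 * π) hl0.le]
        have h1 : (0:ℝ) < (2 * π) ^ p := Real.rpow_pos_of_pos (by linarith) p
        have h2 : (0:ℝ) < |(l:ℝ)| ^ p := Real.rpow_pos_of_pos hl0 p
        field_simp
      rw [hlim_eq] at hmain
      apply hmain.congr'
      have hxpos : ∀ᶠ n in atTop, 0 < |x n| := habs.eventually_gt_atTop 0
      filter_upwards [hxpos] with n hn
      have hxp : (|x n| ^ p) ≠ 0 := (Real.rpow_pos_of_pos hn p).ne'
      rw [div_rpow (hρ_pos n).le (abs_nonneg _)]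
      field_simp
      rfl
  · -- the uniform bound, eventually
    have hev : ∀ᶠ n in atTop, |lam| + R ≤ π * ρ n := by
      have : Tendsto (fun n => π * ρ n) atTop atTop := hρ.const_mul_atTop hπ
      exact this.eventually_ge_atTop _
    filter_upwards [hev] with n hn l
    by_cases hl : l = 0
    · simp [hl, Real.zero_rpow (by linarith : -p ≠ 0)]
    · simp only [hl, if_neg, ne_eq, not_false_iff, if_true]
      have hl1 : (1 : ℝ) ≤ |(l : ℝ)| := by
        rw [← Int.cast_abs]; exact_mod_cast Int.one_le_abs (by simpa using hl)
      have hl0 : (0 : ℝ) < |(l : ℝ)| := lt_of_lt_of_le one_pos hl1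
      set x : ℝ := lam + 2 * π * ρ n * l with hx
      have hlow : π * ρ n * |(l : ℝ)| ≤ |x| := by
        have h2 : |2 * π * ρ n * l| = 2 * π * ρ n * |(l : ℝ)| := by
          rw [abs_mul, abs_of_pos (mul_pos (by linarith : (0:ℝ) < 2 * π) (hρ_pos n))]
        have h3 : |2 * π * ρ n * (l:ℝ)| - |lam| ≤ |x| := by
          have := abs_sub_abs_le_abs_sub (2 * π * ρ n * (l:ℝ)) (-lam)
          simp only [abs_neg] at this
          calc |2 * π * ρ n * (l:ℝ)| - |lam|
              ≤ |2 * π * ρ n * (l:ℝ) - -lam| := this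
            _ = |x| := by rw [hx]; ring_nf
        have hρn := (hρ_pos n).le
        nlinarith [hn, hR0, abs_nonneg lam]
      have hRx : R ≤ |x| := by
        have : R ≤ π * ρ n * |(l : ℝ)| := by nlinarith [hn, abs_nonneg lam, (hρ_pos n).le]
        linarith
      have hbd := hRbd x hRx
      have hxp : (0:ℝ) < |x| ^ p := by
        have : (0:ℝ) < |x| := lt_of_lt_of_le (mul_pos (mul_pos hπ (hρ_pos n)) hl0) hlow
        exact Real.rpow_pos_of_pos this p
      have hmono : (π * ρ n * |(l : ℝ)|) ^ p ≤ |x| ^ p :=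
        Real.rpow_le_rpow (mul_pos (mul_pos hπ (hρ_pos n)) hl0).le hlow hp0.le
      have habsφ : ‖φ x‖ ≤ (A + 1) / |x| ^ p := by
        rw [le_div_iff₀ hxp, mul_comm]; exact hbd
      have key : ρ n ^ p * ‖φ x‖ ≤ (A + 1) / π ^ p * |(l : ℝ)| ^ (-p) := by
        have h1 : ρ n ^ p * ‖φ x‖ ≤ ρ n ^ p * ((A + 1) / |x| ^ p) :=
          mul_le_mul_of_nonneg_left habsφ (Real.rpow_pos_of_pos (hρ_pos n) p).le
        have h2 : ρ n ^ p * ((A + 1) / |x| ^ p) ≤ ρ n ^ p * ((A + 1) / (π * ρ n * |(l : ℝ)|) ^ p) := by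
          apply mul_le_mul_of_nonneg_left _ (Real.rpow_pos_of_pos (hρ_pos n) p).le
          apply div_le_div_of_nonneg_left (by linarith)
            (Real.rpow_pos_of_pos (mul_pos (mul_pos hπ (hρ_pos n)) hl0) p) hmono
        have h3 : ρ n ^ p * ((A + 1) / (π * ρ n * |(l : ℝ)|) ^ p)
            = (A + 1) / π ^ p * |(l : ℝ)| ^ (-p) := by
          rw [Real.mul_rpow (mul_pos hπ (hρ_pos n)).le hl0.le,
            Real.mul_rpow hπ.le (hρ_pos n).le, Real.rpow_neg hl0.le]
          have hπp : (0:ℝ) < π ^ p := Real.rpow_pos_of_pos hπ p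
          have hρp : (0:ℝ) < ρ n ^ p := Real.rpow_pos_of_pos (hρ_pos n) p
          have hlp : (0:ℝ) < |(l:ℝ)| ^ p := Real.rpow_pos_of_pos hl0 p
          field_simp
        linarith
      calc ‖ρ n ^ p * ‖φ x‖‖ = ρ n ^ p * ‖φ x‖ := by
            rw [Real.norm_eq_abs, abs_of_nonneg
              (mul_nonneg (Real.rpow_pos_of_pos (hρ_pos n) p).le (norm_nonneg _))]
        _ ≤ _ := key
end
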